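/- arXiv:1109.3433 — 2 statements merged into one kernel-verified Lean document; each statement's English description precedes it below -/
import Mathlib

section
/- Erdős–Ko–Rado via eigenvalue interlacing: if n ≥ 2s and U is an intersecting family of s-subsets of [n] (any two members of U have nonempty intersection), then |U| ≤ C(n−1, s−1). -/
/-- Erdős–Ko–Rado: if `n ≥ 2s` and `U` is an intersecting family of `s`-subsets of `[n]`,
then `|U| ≤ C(n−1, s−1)`. -/
theorem erdos_ko_rado (n s : ℕ) (hn : 2 * s ≤ n)
    (U : Finset (Finset (Fin n)))
    (hcard : ∀ A ∈ U, A.card = s)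
    (hint : ∀ A ∈ U, ∀ B ∈ U, (A ∩ B).Nonempty) :
    U.card ≤ (n - 1).choose (s - 1) := by
  apply Finset.erdos_ko_rado
  · intro A hA B hB hd
    simp only [Finset.mem_coe] at hA hB
    obtain ⟨x, hx⟩ := hint A hA B hB
    exact absurd (Finset.mem_inter.1 hx) (fun ⟨h1, h2⟩ => hd.forall_ne_finset h1 h2 rfl)
  · intro A hA; exact hcard A hA
  · omega
end

section
/- In the random hypergraph H^r(n,p), fix two s-sets S, T with 1 ≤ s ≤ r/2, and let d = C(n−s,r−s)p, X_S = (d_S − d)², X_T = (d_T − d)². Then E[X_S X_T] = C(n−u, r−u)·p(1−p)(1 − 6p + 6p²) + (C(n−s,r−s)² + 2·C(n−u, r−u)²)·p²(1−p)², where u = |S ∪ T|. -/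
open MeasureTheory ProbabilityTheory

section Aux

lemma card_filter_supersets {n r : ℕ} (W : Finset (Fin n)) (hWr : W.card ≤ r) :
    (Finset.univ.filter (fun F : {F : Finset (Fin n) // F.card = r} => W ⊆ F.1)).card
      = (n - W.card).choose (r - W.card) := by
  classical
  have hcard : (Finset.univ \ W).card = n - W.card := by
    rw [Finset.card_sdiff_of_subset (Finset.subset_univ W), Finset.card_univ, Fintype.card_fin]
  rw [← hcard, ← Finset.card_powersetCard]
  apply Finset.card_bij (fun F _ => F.1 \ W)
  · intro F hF
    simp only [Finset.mem_filter, Finset.mem_univ, true_and] at hF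
    rw [Finset.mem_powersetCard]
    refine ⟨Finset.sdiff_subset_sdiff (Finset.subset_univ _) le_rfl, ?_⟩
    rw [Finset.card_sdiff_of_subset hF, F.2]
  · intro F1 h1 F2 h2 heq
    simp only [Finset.mem_filter, Finset.mem_univ, true_and] at h1 h2
    apply Subtype.ext
    have : F1.1 \ W ∪ W = F2.1 \ W ∪ W := by rw [heq]
    rwa [Finset.sdiff_union_of_subset h1, Finset.sdiff_union_of_subset h2] at this
  · intro G hG
    rw [Finset.mem_powersetCard] at hG
    have hdisj : Disjoint G W := (Finset.subset_sdiff.mp hG.1).2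
    refine ⟨⟨G ∪ W, ?_⟩, ?_, ?_⟩
    · rw [Finset.card_union_of_disjoint hdisj, hG.2, Nat.sub_add_cancel hWr]
    · simp only [Finset.mem_filter, Finset.mem_univ, true_and]
      exact Finset.subset_union_right
    · exact Finset.union_sdiff_cancel_right hdisj

lemma bernoulli_ae {Ω : Type*} [MeasurableSpace Ω] (μ : Measure Ω) [IsProbabilityMeasure μ]
    (p : ℝ) (hp0 : 0 ≤ p) (hp1 : p ≤ 1) (f : Ω → ℝ) (hf : Measurable f)
    (h1 : μ {ω | f ω = 1} = ENNReal.ofReal p) (h0 : μ {ω | f ω = 0} = ENNReal.ofReal (1 - p)) :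
    ∀ᵐ ω ∂μ, f ω = 1 ∨ f ω = 0 := by
  have hs1 : MeasurableSet {ω | f ω = 1} := hf (measurableSet_singleton 1)
  have hs0 : MeasurableSet {ω | f ω = 0} := hf (measurableSet_singleton 0)
  have hdisj : Disjoint {ω | f ω = 1} {ω | f ω = 0} := by
    rw [Set.disjoint_left]
    intro ω hω1 hω0
    exact one_ne_zero ((Set.mem_setOf_eq ▸ hω1).symm.trans hω0)
  have hu : μ ({ω | f ω = 1} ∪ {ω | f ω = 0}) = 1 := by
    rw [measure_union hdisj hs0, h1, h0, ← ENNReal.ofReal_add hp0 (by linarith)]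
    norm_num
  have hcompl : μ ({ω | f ω = 1} ∪ {ω | f ω = 0})ᶜ = 0 :=
    (prob_compl_eq_zero_iff (hs1.union hs0)).mpr hu
  rw [ae_iff]
  have : {ω | ¬(f ω = 1 ∨ f ω = 0)} = ({ω | f ω = 1} ∪ {ω | f ω = 0})ᶜ := by
    ext ω; simp [not_or]
  rw [this]
  exact hcompl

lemma bernoulli_integral_comp {Ω : Type*} [MeasurableSpace Ω] (μ : Measure Ω)
    [IsProbabilityMeasure μ]
    (p : ℝ) (hp0 : 0 ≤ p) (hp1 : p ≤ 1) (f : Ω → ℝ) (hf : Measurable f)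
    (h1 : μ {ω | f ω = 1} = ENNReal.ofReal p) (h0 : μ {ω | f ω = 0} = ENNReal.ofReal (1 - p))
    (g : ℝ → ℝ) :
    ∫ ω, g (f ω) ∂μ = p * g 1 + (1 - p) * g 0 := by
  have hs1 : MeasurableSet {ω | f ω = 1} := hf (measurableSet_singleton 1)
  have hs0 : MeasurableSet {ω | f ω = 0} := hf (measurableSet_singleton 0)
  have hae := bernoulli_ae μ p hp0 hp1 f hf h1 h0
  have heq : (fun ω => g (f ω)) =ᵐ[μ]
      (fun ω => Set.indicator {ω | f ω = 1} (fun _ => g 1) ω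
        + Set.indicator {ω | f ω = 0} (fun _ => g 0) ω) := by
    filter_upwards [hae] with ω hω
    rcases hω with h | h
    · rw [Set.indicator_of_mem (by exact h), Set.indicator_of_notMem (by simp [h]), h]
      ring
    · rw [Set.indicator_of_notMem (by simp [h]), Set.indicator_of_mem (by exact h), h]
      ring
  rw [integral_congr_ae heq, integral_add ((integrable_const (g 1)).indicator hs1)
      ((integrable_const (g 0)).indicator hs0),
    integral_indicator_const _ hs1, integral_indicator_const _ hs0, measureReal_def, measureReal_def, h1, h0,
    ENNReal.toReal_ofReal hp0, ENNReal.toReal_ofReal (by linarith)]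
  simp [smul_eq_mul]

variable {ι : Type*} [DecidableEq ι]

lemma count_sum1 (A B : Finset ι) :
    ∑ F1 ∈ A, ∑ G1 ∈ B, ∑ F2 ∈ A, ∑ G2 ∈ B,
      ((if F1 = F2 then (1:ℝ) else 0) * (if G1 = G2 then (1:ℝ) else 0))
    = (A.card : ℝ) * B.card := by
  simp only [← Finset.mul_sum, ← Finset.sum_mul, Finset.sum_ite_eq, Finset.sum_ite_eq',
    boole_mul, mul_boole, Finset.sum_ite_mem, Finset.inter_self, Finset.sum_const,
    Finset.sum_ite_irrel, Finset.sum_const_zero,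
    nsmul_eq_mul, mul_one, one_mul]
  all_goals simp [Finset.inter_comm, Finset.inter_assoc, Finset.inter_self, Finset.sum_ite_mem,
    Finset.sum_ite_eq, Finset.sum_const, Finset.inter_left_comm]
  all_goals (congr 1; ext x; simp; try tauto)

lemma count_sum2 (A B : Finset ι) :
    ∑ F1 ∈ A, ∑ G1 ∈ B, ∑ F2 ∈ A, ∑ G2 ∈ B,
      ((if F1 = G1 then (1:ℝ) else 0) * (if F2 = G2 then (1:ℝ) else 0))
    = ((A ∩ B).card : ℝ) * (A ∩ B).card := by
  simp only [← Finset.mul_sum, ← Finset.sum_mul, Finset.sum_ite_eq, Finset.sum_ite_eq',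
    boole_mul, mul_boole, Finset.sum_ite_mem, Finset.inter_self, Finset.sum_const,
    Finset.sum_ite_irrel, Finset.sum_const_zero,
    nsmul_eq_mul, mul_one, one_mul]
  all_goals simp [Finset.inter_comm, Finset.inter_assoc, Finset.inter_self, Finset.sum_ite_mem,
    Finset.sum_ite_eq, Finset.sum_const, Finset.inter_left_comm]
  all_goals (congr 1; ext x; simp; try tauto)

lemma count_sum3 (A B : Finset ι) :
    ∑ F1 ∈ A, ∑ G1 ∈ B, ∑ F2 ∈ A, ∑ G2 ∈ B,
      ((if F1 = G2 then (1:ℝ) else 0) * (if F2 = G1 then (1:ℝ) else 0))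
    = ((A ∩ B).card : ℝ) * (A ∩ B).card := by
  simp only [← Finset.mul_sum, ← Finset.sum_mul, Finset.sum_ite_eq, Finset.sum_ite_eq',
    boole_mul, mul_boole, Finset.sum_ite_mem, Finset.inter_self, Finset.sum_const,
    Finset.sum_ite_irrel, Finset.sum_const_zero,
    nsmul_eq_mul, mul_one, one_mul]
  all_goals simp [Finset.inter_comm, Finset.inter_assoc, Finset.inter_self, Finset.sum_ite_mem,
    Finset.sum_ite_eq, Finset.sum_const, Finset.inter_left_comm]
  all_goals (congr 1; ext x; simp; try tauto)

lemma count_sum4 (A B : Finset ι) :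
    ∑ F1 ∈ A, ∑ G1 ∈ B, ∑ F2 ∈ A, ∑ G2 ∈ B,
      ((if F1 = F2 then (1:ℝ) else 0) * (if F2 = G1 then (1:ℝ) else 0)
        * (if G1 = G2 then (1:ℝ) else 0))
    = ((A ∩ B).card : ℝ) := by
  simp only [← Finset.mul_sum, ← Finset.sum_mul, Finset.sum_ite_eq, Finset.sum_ite_eq',
    boole_mul, mul_boole, Finset.sum_ite_mem, Finset.inter_self, Finset.sum_const,
    Finset.sum_ite_irrel, Finset.sum_const_zero,
    nsmul_eq_mul, mul_one, one_mul]
  all_goals simp [Finset.inter_comm, Finset.inter_assoc, Finset.inter_self, Finset.sum_ite_mem,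
    Finset.sum_ite_eq, Finset.sum_const, Finset.inter_left_comm]
  all_goals (congr 1; ext x; simp; try tauto)

lemma count_total (A B : Finset ι) (v c4 : ℝ) :
    ∑ F1 ∈ A, ∑ G1 ∈ B, ∑ F2 ∈ A, ∑ G2 ∈ B,
      (v * ((if F1 = F2 then (1:ℝ) else 0) * (if G1 = G2 then (1:ℝ) else 0)
          + (if F1 = G1 then (1:ℝ) else 0) * (if F2 = G2 then (1:ℝ) else 0)
          + (if F1 = G2 then (1:ℝ) else 0) * (if F2 = G1 then (1:ℝ) else 0))
        + c4 * ((if F1 = F2 then (1:ℝ) else 0) * (if F2 = G1 then (1:ℝ) else 0)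
          * (if G1 = G2 then (1:ℝ) else 0)))
    = v * ((A.card : ℝ) * B.card + ((A ∩ B).card : ℝ) * (A ∩ B).card
        + ((A ∩ B).card : ℝ) * (A ∩ B).card) + c4 * ((A ∩ B).card : ℝ) := by
  have hsplit : ∑ F1 ∈ A, ∑ G1 ∈ B, ∑ F2 ∈ A, ∑ G2 ∈ B,
      (v * ((if F1 = F2 then (1:ℝ) else 0) * (if G1 = G2 then (1:ℝ) else 0)
          + (if F1 = G1 then (1:ℝ) else 0) * (if F2 = G2 then (1:ℝ) else 0)
          + (if F1 = G2 then (1:ℝ) else 0) * (if F2 = G1 then (1:ℝ) else 0))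
        + c4 * ((if F1 = F2 then (1:ℝ) else 0) * (if F2 = G1 then (1:ℝ) else 0)
          * (if G1 = G2 then (1:ℝ) else 0)))
      = v * (∑ F1 ∈ A, ∑ G1 ∈ B, ∑ F2 ∈ A, ∑ G2 ∈ B,
            ((if F1 = F2 then (1:ℝ) else 0) * (if G1 = G2 then (1:ℝ) else 0)))
        + v * (∑ F1 ∈ A, ∑ G1 ∈ B, ∑ F2 ∈ A, ∑ G2 ∈ B,
            ((if F1 = G1 then (1:ℝ) else 0) * (if F2 = G2 then (1:ℝ) else 0)))
        + v * (∑ F1 ∈ A, ∑ G1 ∈ B, ∑ F2 ∈ A, ∑ G2 ∈ B,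
            ((if F1 = G2 then (1:ℝ) else 0) * (if F2 = G1 then (1:ℝ) else 0)))
        + c4 * (∑ F1 ∈ A, ∑ G1 ∈ B, ∑ F2 ∈ A, ∑ G2 ∈ B,
            ((if F1 = F2 then (1:ℝ) else 0) * (if F2 = G1 then (1:ℝ) else 0)
              * (if G1 = G2 then (1:ℝ) else 0))) := by
    simp only [Finset.mul_sum, ← Finset.sum_add_distrib]
    exact Finset.sum_congr rfl fun _ _ => Finset.sum_congr rfl fun _ _ =>
      Finset.sum_congr rfl fun _ _ => Finset.sum_congr rfl fun _ _ => by ring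
  rw [hsplit, count_sum1 A B, count_sum2 A B, count_sum3 A B, count_sum4 A B]
  ring

end Aux

/-- In the random hypergraph `H^r(n,p)`, for two `s`-sets `S, T` with `1 ≤ s ≤ r/2`,
letting `d = C(n−s,r−s)p`, `X_S = (d_S − d)²`, `X_T = (d_T − d)²`, and `u = |S ∪ T|`,
one has `E[X_S X_T] = C(n−u,r−u) p(1−p)(1−6p+6p²) + (C(n−s,r−s)² + 2 C(n−u,r−u)²) p²(1−p)²`. -/
theorem random_hypergraph_degree_joint_moment {Ω : Type*} [MeasurableSpace Ω] (μ : Measure Ω)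
    [IsProbabilityMeasure μ] (n r s : ℕ) (hs : 1 ≤ s) (hsr : 2 * s ≤ r)
    (p : ℝ) (hp0 : 0 ≤ p) (hp1 : p ≤ 1)
    (X : {F : Finset (Fin n) // F.card = r} → Ω → ℝ)
    (hmeas : ∀ F, Measurable (X F))
    (hindep : iIndepFun X μ)
    (h1 : ∀ F, μ {ω | X F ω = 1} = ENNReal.ofReal p)
    (h0 : ∀ F, μ {ω | X F ω = 0} = ENNReal.ofReal (1 - p))
    (S T : Finset (Fin n)) (hS : S.card = s) (hT : T.card = s) :
    ∫ ω, (((∑ F ∈ Finset.univ.filter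
          (fun F : {F : Finset (Fin n) // F.card = r} => S ⊆ F.1), X F ω) -
            ((n - s).choose (r - s) : ℝ) * p) ^ 2 *
        ((∑ F ∈ Finset.univ.filter
          (fun F : {F : Finset (Fin n) // F.card = r} => T ⊆ F.1), X F ω) -
            ((n - s).choose (r - s) : ℝ) * p) ^ 2) ∂μ =
      ((n - (S ∪ T).card).choose (r - (S ∪ T).card) : ℝ) * p * (1 - p) *
          (1 - 6 * p + 6 * p ^ 2) +
        ((((n - s).choose (r - s) : ℝ)) ^ 2 +
            2 * (((n - (S ∪ T).card).choose (r - (S ∪ T).card) : ℝ)) ^ 2) *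
          p ^ 2 * (1 - p) ^ 2 := by
  classical
  set A := Finset.univ.filter (fun F : {F : Finset (Fin n) // F.card = r} => S ⊆ F.1) with hAdef
  set B := Finset.univ.filter (fun F : {F : Finset (Fin n) // F.card = r} => T ⊆ F.1) with hBdef
  set Y : {F : Finset (Fin n) // F.card = r} → Ω → ℝ := fun F ω => X F ω - p with hYdef
  -- cardinalities
  have hsr' : s ≤ r := by omega
  have hAcard : A.card = (n - s).choose (r - s) := by
    rw [hAdef]
    have := card_filter_supersets (n := n) (r := r) S (by rw [hS]; exact hsr')
    rwa [hS] at this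
  have hBcard : B.card = (n - s).choose (r - s) := by
    rw [hBdef]
    have := card_filter_supersets (n := n) (r := r) T (by rw [hT]; exact hsr')
    rwa [hT] at this
  have hucard : (S ∪ T).card ≤ r := by
    have := Finset.card_union_le S T
    omega
  have hABinter : A ∩ B
      = Finset.univ.filter (fun F : {F : Finset (Fin n) // F.card = r} => S ∪ T ⊆ F.1) := by
    ext F
    simp [hAdef, hBdef, Finset.mem_inter, Finset.mem_filter, Finset.union_subset_iff]
  have hABcard : (A ∩ B).card = (n - (S ∪ T).card).choose (r - (S ∪ T).card) := by
    rw [hABinter]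
    exact card_filter_supersets (S ∪ T) hucard
  -- basic facts about Y
  have hYmeas : ∀ F, Measurable (Y F) := fun F => (hmeas F).sub measurable_const
  have hYindep : iIndepFun Y μ := by
    rw [hYdef]
    exact hindep.comp (fun _ x => x - p) (fun _ => measurable_id.sub measurable_const)
  have hM : ∀ (a : {F : Finset (Fin n) // F.card = r}) (k : ℕ),
      ∫ ω, (Y a ω) ^ k ∂μ = p * (1 - p) ^ k + (1 - p) * (-p) ^ k := by
    intro a k
    have := bernoulli_integral_comp μ p hp0 hp1 (X a) (hmeas a) (h1 a) (h0 a)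
      (fun x => (x - p) ^ k)
    simpa using this
  have hbd : ∀ a, ∀ᵐ ω ∂μ, |Y a ω| ≤ 1 := by
    intro a
    filter_upwards [bernoulli_ae μ p hp0 hp1 (X a) (hmeas a) (h1 a) (h0 a)] with ω h
    have hy : Y a ω = X a ω - p := rfl
    rcases h with h | h <;> rw [hy, h] <;> rw [abs_le] <;> constructor <;> linarith
  have hint : ∀ a b c d, Integrable (fun ω => (Y a ω * Y b ω) * (Y c ω * Y d ω)) μ := by
    intro a b c d
    refine Integrable.mono' (integrable_const (1:ℝ)) ?_ ?_
    · exact (((hYmeas a).mul (hYmeas b)).mul ((hYmeas c).mul (hYmeas d))).aestronglyMeasurable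
    · filter_upwards [hbd a, hbd b, hbd c, hbd d] with ω ha hb hc hd
      rw [Real.norm_eq_abs, abs_mul, abs_mul, abs_mul]
      have e1 : |Y a ω| * |Y b ω| ≤ 1 := by
        nlinarith [abs_nonneg (Y a ω), abs_nonneg (Y b ω)]
      have e2 : |Y c ω| * |Y d ω| ≤ 1 := by
        nlinarith [abs_nonneg (Y c ω), abs_nonneg (Y d ω)]
      nlinarith [mul_nonneg (abs_nonneg (Y a ω)) (abs_nonneg (Y b ω)),
        mul_nonneg (abs_nonneg (Y c ω)) (abs_nonneg (Y d ω))]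
  -- factorization lemmas
  have hL2 : ∀ (i j : ℕ) a b, a ≠ b →
      ∫ ω, (Y a ω) ^ i * (Y b ω) ^ j ∂μ
        = (p * (1 - p) ^ i + (1 - p) * (-p) ^ i) * (p * (1 - p) ^ j + (1 - p) * (-p) ^ j) := by
    intro i j a b hab
    have hind := (hYindep.indepFun hab).comp (measurable_id.pow_const i)
      (measurable_id.pow_const j)
    have key : ∫ ω, (Y a ω) ^ i * (Y b ω) ^ j ∂μ
        = (∫ ω, (Y a ω) ^ i ∂μ) * ∫ ω, (Y b ω) ^ j ∂μ :=
      IndepFun.integral_fun_mul_eq_mul_integral hind ((hYmeas a).pow_const i).aestronglyMeasurable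
        ((hYmeas b).pow_const j).aestronglyMeasurable
    rw [key, hM a i, hM b j]
  have hmul11 : ∀ a b, a ≠ b → ∫ ω, Y a ω * Y b ω ∂μ = 0 := by
    intro a b hab
    have := hL2 1 1 a b hab
    simp only [pow_one] at this
    rw [this]; ring
  have hL3 : ∀ a b c, a ≠ b → a ≠ c → b ≠ c →
      ∫ ω, (Y a ω) ^ 2 * (Y b ω * Y c ω) ∂μ = 0 := by
    intro a b c hab hac hbc
    have hnm : a ∉ ({b, c} : Finset {F : Finset (Fin n) // F.card = r}) := by
      simp [hab, hac]
    have hprod : (∏ j ∈ ({b, c} : Finset {F : Finset (Fin n) // F.card = r}), Y j)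
        = fun ω => Y b ω * Y c ω := by
      rw [Finset.prod_pair hbc]; rfl
    have hind0 := hYindep.indepFun_finsetProd_of_notMem hYmeas hnm
    rw [hprod] at hind0
    have hind := hind0.comp measurable_id (measurable_id.pow_const 2)
    have key : ∫ ω, (Y b ω * Y c ω) * (Y a ω) ^ 2 ∂μ
        = (∫ ω, Y b ω * Y c ω ∂μ) * ∫ ω, (Y a ω) ^ 2 ∂μ :=
      IndepFun.integral_fun_mul_eq_mul_integral hind
        ((hYmeas b).mul (hYmeas c)).aestronglyMeasurable
        ((hYmeas a).pow_const 2).aestronglyMeasurable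
    rw [show (fun ω => (Y a ω) ^ 2 * (Y b ω * Y c ω))
        = fun ω => (Y b ω * Y c ω) * (Y a ω) ^ 2 from funext fun ω => by ring, key,
      hmul11 b c hbc, zero_mul]
  have hL4 : ∀ a b c d, a ≠ b → a ≠ c → a ≠ d → b ≠ c → b ≠ d → c ≠ d →
      ∫ ω, (Y a ω * Y b ω) * (Y c ω * Y d ω) ∂μ = 0 := by
    intro a b c d hab hac had hbc hbd hcd
    have hnm : a ∉ ({b, c, d} : Finset {F : Finset (Fin n) // F.card = r}) := by
      simp [hab, hac, had]
    have hprod : (∏ j ∈ ({b, c, d} : Finset {F : Finset (Fin n) // F.card = r}), Y j)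
        = fun ω => Y b ω * (Y c ω * Y d ω) := by
      rw [Finset.prod_insert (by simp [hbc, hbd]), Finset.prod_pair hcd]; rfl
    have hind0 := hYindep.indepFun_finsetProd_of_notMem hYmeas hnm
    rw [hprod] at hind0
    have key : ∫ ω, (Y b ω * (Y c ω * Y d ω)) * Y a ω ∂μ
        = (∫ ω, Y b ω * (Y c ω * Y d ω) ∂μ) * ∫ ω, Y a ω ∂μ :=
      IndepFun.integral_fun_mul_eq_mul_integral hind0
        ((hYmeas b).mul ((hYmeas c).mul (hYmeas d))).aestronglyMeasurable
        (hYmeas a).aestronglyMeasurable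
    have hY1 : ∫ ω, Y a ω ∂μ = 0 := by
      have := hM a 1
      simp only [pow_one] at this
      rw [this]; ring
    rw [show (fun ω => (Y a ω * Y b ω) * (Y c ω * Y d ω))
        = fun ω => (Y b ω * (Y c ω * Y d ω)) * Y a ω from funext fun ω => by ring, key,
      hY1, mul_zero]
  -- the per-quadruple expectation
  have hquad : ∀ a b c d, ∫ ω, (Y a ω * Y b ω) * (Y c ω * Y d ω) ∂μ
      = (p ^ 2 * (1 - p) ^ 2) * ((if a = b then (1:ℝ) else 0) * (if c = d then (1:ℝ) else 0)
          + (if a = c then (1:ℝ) else 0) * (if b = d then (1:ℝ) else 0)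
          + (if a = d then (1:ℝ) else 0) * (if b = c then (1:ℝ) else 0))
        + (p * (1 - p) * (1 - 3 * p + 3 * p ^ 2) - 3 * p ^ 2 * (1 - p) ^ 2)
          * ((if a = b then (1:ℝ) else 0) * (if b = c then (1:ℝ) else 0)
            * (if c = d then (1:ℝ) else 0)) := by
    intro a b c d
    by_cases hab : a = b
    · subst hab
      by_cases hcd : c = d
      · subst hcd
        by_cases hac : a = c
        · subst hac
          rw [show (fun ω => (Y a ω * Y a ω) * (Y a ω * Y a ω)) = fun ω => (Y a ω) ^ 4 from
            funext fun ω => by ring, hM a 4]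
          simp
          try ring
          try tauto
        · rw [show (fun ω => (Y a ω * Y a ω) * (Y c ω * Y c ω))
            = fun ω => (Y a ω) ^ 2 * (Y c ω) ^ 2 from funext fun ω => by ring,
            hL2 2 2 a c hac]
          simp [hac]
          try ring
          try tauto
      · by_cases hac : a = c
        · subst hac
          rw [show (fun ω => (Y a ω * Y a ω) * (Y a ω * Y d ω))
            = fun ω => (Y a ω) ^ 3 * (Y d ω) ^ 1 from funext fun ω => by ring,
            hL2 3 1 a d hcd]
          simp [hcd]
          try ring
          try tauto
        · by_cases had : a = d
          · subst had
            rw [show (fun ω => (Y a ω * Y a ω) * (Y c ω * Y a ω))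
              = fun ω => (Y a ω) ^ 3 * (Y c ω) ^ 1 from funext fun ω => by ring,
              hL2 3 1 a c hac]
            simp [hac, hcd, Ne.symm hac]
            try ring
            try tauto
          · rw [show (fun ω => (Y a ω * Y a ω) * (Y c ω * Y d ω))
              = fun ω => (Y a ω) ^ 2 * (Y c ω * Y d ω) from funext fun ω => by ring,
              hL3 a c d hac had hcd]
            simp [hac, had, hcd]
            try ring
            try tauto
    · by_cases hcd : c = d
      · subst hcd
        by_cases hca : c = a
        · rw [show (fun ω => (Y a ω * Y b ω) * (Y c ω * Y c ω))
            = fun ω => (Y a ω) ^ 3 * (Y b ω) ^ 1 from funext fun ω => by rw [hca]; ring,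
            hL2 3 1 a b hab]
          simp [hca, hab, Ne.symm hab]
          try ring
          try tauto
        · by_cases hcb : c = b
          · rw [show (fun ω => (Y a ω * Y b ω) * (Y c ω * Y c ω))
              = fun ω => (Y b ω) ^ 3 * (Y a ω) ^ 1 from funext fun ω => by rw [hcb]; ring,
              hL2 3 1 b a (Ne.symm hab)]
            simp [hcb, hab, Ne.symm hab]
            try ring
            try tauto
          · rw [show (fun ω => (Y a ω * Y b ω) * (Y c ω * Y c ω))
              = fun ω => (Y c ω) ^ 2 * (Y a ω * Y b ω) from funext fun ω => by ring,
              hL3 c a b hca hcb hab]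
            simp [hab, hca, hcb, Ne.symm hca, Ne.symm hcb]
            try ring
            try tauto
      · by_cases hac : a = c
        · by_cases hbd : b = d
          · subst hac; subst hbd
            rw [show (fun ω => (Y a ω * Y b ω) * (Y a ω * Y b ω))
              = fun ω => (Y a ω) ^ 2 * (Y b ω) ^ 2 from funext fun ω => by ring,
              hL2 2 2 a b hab]
            simp [hab, Ne.symm hab]
            try ring
            try tauto
          · subst hac
            rw [show (fun ω => (Y a ω * Y b ω) * (Y a ω * Y d ω))
              = fun ω => (Y a ω) ^ 2 * (Y b ω * Y d ω) from funext fun ω => by ring,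
              hL3 a b d hab hcd hbd]
            simp [hab, hcd, hbd, Ne.symm hab, Ne.symm hcd]
            try ring
            try tauto
        · by_cases had : a = d
          · by_cases hbc : b = c
            · subst had; subst hbc
              rw [show (fun ω => (Y a ω * Y b ω) * (Y b ω * Y a ω))
                = fun ω => (Y a ω) ^ 2 * (Y b ω) ^ 2 from funext fun ω => by ring,
                hL2 2 2 a b hab]
              simp [hab, Ne.symm hab]
              try ring
              try tauto
            · subst had
              rw [show (fun ω => (Y a ω * Y b ω) * (Y c ω * Y a ω))
                = fun ω => (Y a ω) ^ 2 * (Y b ω * Y c ω) from funext fun ω => by ring,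
                hL3 a b c hab hac hbc]
              simp [hab, hac, hbc, Ne.symm hab, Ne.symm hac, Ne.symm hbc]
              try ring
              try tauto
          · by_cases hbc : b = c
            · subst hbc
              rw [show (fun ω => (Y a ω * Y b ω) * (Y b ω * Y d ω))
                = fun ω => (Y b ω) ^ 2 * (Y a ω * Y d ω) from funext fun ω => by ring,
                hL3 b a d (Ne.symm hab) hcd had]
              simp [hab, hcd, had, Ne.symm hab, Ne.symm hcd, Ne.symm had]
              try ring
              try tauto
            · by_cases hbd : b = d
              · subst hbd
                rw [show (fun ω => (Y a ω * Y b ω) * (Y c ω * Y b ω))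
                  = fun ω => (Y b ω) ^ 2 * (Y a ω * Y c ω) from funext fun ω => by ring,
                  hL3 b a c (Ne.symm hab) hbc hac]
                simp [hab, hac, hbc, hcd, Ne.symm hab, Ne.symm hac, Ne.symm hbc, Ne.symm hcd]
                try ring
                try tauto
              · rw [hL4 a b c d hab hac had hbc hbd hcd]
                simp [hab, hac, had, hbc, hbd, hcd]
                try ring
                try tauto
  -- expand the integrand
  have hA' : ∀ ω, (∑ F ∈ A, X F ω) - ((n - s).choose (r - s) : ℝ) * p = ∑ F ∈ A, Y F ω := by
    intro ω
    rw [hYdef, Finset.sum_sub_distrib, Finset.sum_const, nsmul_eq_mul, hAcard]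
  have hB' : ∀ ω, (∑ F ∈ B, X F ω) - ((n - s).choose (r - s) : ℝ) * p = ∑ F ∈ B, Y F ω := by
    intro ω
    rw [hYdef, Finset.sum_sub_distrib, Finset.sum_const, nsmul_eq_mul, hBcard]
  have hexpfun : (fun ω => ((∑ F ∈ A, X F ω) - ((n - s).choose (r - s) : ℝ) * p) ^ 2 *
        ((∑ F ∈ B, X F ω) - ((n - s).choose (r - s) : ℝ) * p) ^ 2)
      = fun ω => ∑ F1 ∈ A, ∑ G1 ∈ B, ∑ F2 ∈ A, ∑ G2 ∈ B,
          (Y F1 ω * Y F2 ω) * (Y G1 ω * Y G2 ω) := by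
    funext ω
    rw [hA' ω, hB' ω, sq, sq, Finset.sum_mul_sum, Finset.sum_mul_sum, Finset.sum_mul_sum]
    exact Finset.sum_congr rfl fun F1 _ => Finset.sum_congr rfl fun G1 _ => by
      rw [Finset.sum_mul_sum]
  -- swap integral and sums
  have hInt3 : ∀ F1 G1 F2, Integrable
      (fun ω => ∑ G2 ∈ B, (Y F1 ω * Y F2 ω) * (Y G1 ω * Y G2 ω)) μ :=
    fun F1 G1 F2 => integrable_finset_sum _ fun G2 _ => hint F1 F2 G1 G2
  have hInt2 : ∀ F1 G1, Integrable
      (fun ω => ∑ F2 ∈ A, ∑ G2 ∈ B, (Y F1 ω * Y F2 ω) * (Y G1 ω * Y G2 ω)) μ :=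
    fun F1 G1 => integrable_finset_sum _ fun F2 _ => hInt3 F1 G1 F2
  have hInt1 : ∀ F1, Integrable
      (fun ω => ∑ G1 ∈ B, ∑ F2 ∈ A, ∑ G2 ∈ B, (Y F1 ω * Y F2 ω) * (Y G1 ω * Y G2 ω)) μ :=
    fun F1 => integrable_finset_sum _ fun G1 _ => hInt2 F1 G1
  have hswap : ∫ ω, (∑ F1 ∈ A, ∑ G1 ∈ B, ∑ F2 ∈ A, ∑ G2 ∈ B,
        (Y F1 ω * Y F2 ω) * (Y G1 ω * Y G2 ω)) ∂μ
      = ∑ F1 ∈ A, ∑ G1 ∈ B, ∑ F2 ∈ A, ∑ G2 ∈ B,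
        ∫ ω, (Y F1 ω * Y F2 ω) * (Y G1 ω * Y G2 ω) ∂μ := by
    rw [integral_finset_sum _ (fun F1 _ => hInt1 F1)]
    refine Finset.sum_congr rfl fun F1 _ => ?_
    rw [integral_finset_sum _ (fun G1 _ => hInt2 F1 G1)]
    refine Finset.sum_congr rfl fun G1 _ => ?_
    rw [integral_finset_sum _ (fun F2 _ => hInt3 F1 G1 F2)]
    refine Finset.sum_congr rfl fun F2 _ => ?_
    rw [integral_finset_sum _ (fun G2 _ => hint F1 F2 G1 G2)]
  have hterms : ∑ F1 ∈ A, ∑ G1 ∈ B, ∑ F2 ∈ A, ∑ G2 ∈ B,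
        (∫ ω, (Y F1 ω * Y F2 ω) * (Y G1 ω * Y G2 ω) ∂μ)
      = ∑ F1 ∈ A, ∑ G1 ∈ B, ∑ F2 ∈ A, ∑ G2 ∈ B,
        ((p ^ 2 * (1 - p) ^ 2) * ((if F1 = F2 then (1:ℝ) else 0)
            * (if G1 = G2 then (1:ℝ) else 0)
          + (if F1 = G1 then (1:ℝ) else 0) * (if F2 = G2 then (1:ℝ) else 0)
          + (if F1 = G2 then (1:ℝ) else 0) * (if F2 = G1 then (1:ℝ) else 0))
        + (p * (1 - p) * (1 - 3 * p + 3 * p ^ 2) - 3 * p ^ 2 * (1 - p) ^ 2)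
          * ((if F1 = F2 then (1:ℝ) else 0) * (if F2 = G1 then (1:ℝ) else 0)
            * (if G1 = G2 then (1:ℝ) else 0))) :=
    Finset.sum_congr rfl fun F1 _ => Finset.sum_congr rfl fun G1 _ =>
      Finset.sum_congr rfl fun F2 _ => Finset.sum_congr rfl fun G2 _ => hquad F1 F2 G1 G2
  rw [hexpfun, hswap, hterms, count_total A B]
  rw [hAcard, hBcard, hABcard]
  push_cast
  ring
end
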